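/- arXiv:2506.03924 — 2 statements merged into one kernel-verified Lean document; each statement's English description precedes it below -/
import Mathlib

section
/- Let t > 0, c ∈ ℝ, let φ : ℝ → ℝ be Lebesgue integrable, and let ψ : ℝ × ℝ → ℝ be continuous with compact support. Define μ : ℝ → ℝ by μ(u) = ∫_ℝ φ(u − ct + x) dγ_t(x) − ∫_0^t ( ∫_ℝ ψ(s, u − c(t−s) + x) dγ_{t−s}(x) ) ds. Then the function u ↦ μ(u) − φ(u) is Lebesgue integrable on (0,∞) and ∫_0^∞ ( μ(u) − φ(u) ) du = ∫_ℝ φ(u) R(u) du − ∫_0^t ( ∫_ℝ ψ(s,v) · γ_{t−s}( [−v − c(t−s), ∞) ) dv ) ds, where R(u) = γ_t( [−u − ct, ∞) ) − 1_{[0,∞)}(u). -/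
open MeasureTheory ProbabilityTheory Set
open scoped NNReal ENNReal

lemma shift_Ioi (g : ℝ → ℝ) (a d : ℝ) :
    ∫ u in Ioi a, g (u + d) = ∫ v in Ioi (a + d), g v := by
  rw [← integral_indicator measurableSet_Ioi, ← integral_indicator measurableSet_Ioi,
    ← integral_add_right_eq_self (fun v => (Ioi (a + d)).indicator g v) d]
  congr 1
  ext u
  by_cases h : u ∈ Ioi a
  · rw [indicator_of_mem h, indicator_of_mem (by simpa using add_lt_add_right h.out d)]
  · rw [indicator_of_notMem h, indicator_of_notMem (by simp at h ⊢; linarith)]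

lemma key (f : ℝ → ℝ) (hfm : Measurable f) (hf : Integrable f)
    (ν : Measure ℝ) [IsProbabilityMeasure ν] (b : ℝ) :
    IntegrableOn (fun u => ∫ x, f (u + b + x) ∂ν) (Ioi 0) ∧
    (∫ u in Ioi 0, ‖∫ x, f (u + b + x) ∂ν‖) ≤ (∫ v, ‖f v‖) ∧
    ∫ u in Ioi 0, ∫ x, f (u + b + x) ∂ν = ∫ v, f v * (ν (Iio (v - b))).toReal := by
  set M : Measure (ℝ × ℝ) := (volume.restrict (Ioi 0)).prod ν with hM
  have hmeas : Measurable fun p : ℝ × ℝ => f (p.1 + b + p.2) :=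
    hfm.comp (by fun_prop)
  -- slice integrability
  have hslice : ∀ x : ℝ, Integrable (fun u => f (u + b + x)) (volume.restrict (Ioi 0)) := by
    intro x
    have : Integrable (fun u => f (u + (b + x))) volume :=
      (measurePreserving_add_right volume (b + x)).integrable_comp hf.aestronglyMeasurable
        |>.mpr hf
    simpa [add_assoc] using this.integrableOn.integrable
  -- norm integral function
  have hNval : ∀ x : ℝ, (∫ u in Ioi 0, ‖f (u + b + x)‖) = ∫ v in Ioi (b + x), ‖f v‖ := by
    intro x
    have := shift_Ioi (fun v => ‖f v‖) 0 (b + x)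
    simpa [add_assoc, zero_add] using this
  have hNanti : Antitone fun x : ℝ => ∫ v in Ioi (b + x), ‖f v‖ := by
    intro x y hxy
    exact setIntegral_mono_set hf.norm.integrableOn
      (Filter.Eventually.of_forall fun v => norm_nonneg _)
      (HasSubset.Subset.eventuallyLE (Ioi_subset_Ioi (by linarith)))
  have hNbdd : ∀ x : ℝ, (∫ v in Ioi (b + x), ‖f v‖) ≤ ∫ v, ‖f v‖ := fun x =>
    setIntegral_le_integral hf.norm (Filter.Eventually.of_forall fun v => norm_nonneg _)
  have hNnonneg : ∀ x : ℝ, 0 ≤ ∫ v in Ioi (b + x), ‖f v‖ := fun x =>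
    integral_nonneg fun v => norm_nonneg _
  have hNint : Integrable (fun x => ∫ v in Ioi (b + x), ‖f v‖) ν := by
    refine Integrable.mono' (integrable_const (∫ v, ‖f v‖))
      hNanti.measurable.aestronglyMeasurable
      (Filter.Eventually.of_forall fun x => ?_)
    rw [Real.norm_of_nonneg (hNnonneg x)]; exact hNbdd x
  have hInt : Integrable (fun p : ℝ × ℝ => f (p.1 + b + p.2)) M := by
    rw [hM, integrable_prod_iff' hmeas.aestronglyMeasurable]
    constructor
    · exact Filter.Eventually.of_forall fun x => hslice x
    · refine hNint.congr (Filter.Eventually.of_forall fun x => ?_)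
      exact (hNval x).symm
  have hF1 : IntegrableOn (fun u => ∫ x, f (u + b + x) ∂ν) (Ioi 0) :=
    hInt.integral_prod_left
  have h1 : (∫ u in Ioi 0, ∫ x, ‖f (u + b + x)‖ ∂ν)
      = ∫ x, (∫ u in Ioi 0, ‖f (u + b + x)‖) ∂ν := by
    rw [← integral_prod _ hInt.norm, integral_prod_symm _ hInt.norm]
  have hF2 : (∫ u in Ioi 0, ‖∫ x, f (u + b + x) ∂ν‖) ≤ ∫ v, ‖f v‖ := by
    calc ∫ u in Ioi 0, ‖∫ x, f (u + b + x) ∂ν‖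
        ≤ ∫ u in Ioi 0, ∫ x, ‖f (u + b + x)‖ ∂ν :=
          integral_mono hF1.norm hInt.norm.integral_prod_left
            (fun u => norm_integral_le_integral_norm _)
      _ = ∫ x, (∫ u in Ioi 0, ‖f (u + b + x)‖) ∂ν := h1
      _ = ∫ x, (∫ v in Ioi (b + x), ‖f v‖) ∂ν :=
          integral_congr_ae (Filter.Eventually.of_forall hNval)
      _ ≤ ∫ _x, (∫ v, ‖f v‖ : ℝ) ∂ν := integral_mono hNint (integrable_const _) hNbdd
      _ = ∫ v, ‖f v‖ := by simp
  have hmain : (∫ u in Ioi 0, ∫ x, f (u + b + x) ∂ν)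
      = ∫ x, (∫ v in Ioi (b + x), f v) ∂ν := by
    rw [← integral_prod _ hInt, integral_prod_symm _ hInt]
    refine integral_congr_ae (Filter.Eventually.of_forall fun x => ?_)
    have := shift_Ioi f 0 (b + x); simpa [add_assoc] using this
  set g2 : ℝ × ℝ → ℝ := fun p => (Ioi (b + p.1)).indicator f p.2 with hg2
  have hg2m : Measurable g2 := by
    have : g2 = Set.indicator {p : ℝ × ℝ | b + p.1 < p.2} (fun p => f p.2) := by
      ext p
      by_cases h : b + p.1 < p.2 <;> simp [hg2, indicator_apply, h]
    rw [this]
    exact (hfm.comp measurable_snd).indicator (measurableSet_lt (by fun_prop) (by fun_prop))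
  have hg2int : Integrable g2 (ν.prod volume) := by
    rw [integrable_prod_iff hg2m.aestronglyMeasurable]
    constructor
    · exact Filter.Eventually.of_forall fun x =>
        (hf.indicator measurableSet_Ioi :
          Integrable ((Ioi (b + x)).indicator f) volume)
    · refine hNint.congr (Filter.Eventually.of_forall fun x => ?_)
      show (∫ v in Ioi (b + x), ‖f v‖) = ∫ y, ‖g2 (x, y)‖
      calc (∫ v in Ioi (b + x), ‖f v‖)
          = ∫ v, (Ioi (b + x)).indicator (fun v => ‖f v‖) v :=
            (integral_indicator measurableSet_Ioi).symm
        _ = ∫ y, ‖g2 (x, y)‖ := integral_congr_ae (Filter.Eventually.of_forall fun v =>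
            (norm_indicator_eq_indicator_norm f v).symm)
  have h2 : (∫ x, (∫ v in Ioi (b + x), f v) ∂ν) = ∫ v, f v * (ν (Iio (v - b))).toReal := by
    calc (∫ x, (∫ v in Ioi (b + x), f v) ∂ν)
        = ∫ x, ∫ v, g2 (x, v) ∂volume ∂ν := by
          refine integral_congr_ae (Filter.Eventually.of_forall fun x => ?_)
          show (∫ v in Ioi (b + x), f v) = ∫ v, g2 (x, v)
          exact (integral_indicator measurableSet_Ioi).symm
      _ = ∫ v, ∫ x, g2 (x, v) ∂ν ∂volume := by
          rw [← integral_prod _ hg2int, integral_prod_symm _ hg2int]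
      _ = ∫ v, f v * (ν (Iio (v - b))).toReal := by
          refine integral_congr_ae (Filter.Eventually.of_forall fun v => ?_)
          show (∫ x, g2 (x, v) ∂ν) = f v * (ν (Iio (v - b))).toReal
          have hx : (fun x => g2 (x, v)) = fun x => (Iio (v - b)).indicator (fun _ => f v) x := by
            ext x
            simp only [hg2, indicator_apply, mem_Ioi, mem_Iio]
            by_cases h : b + x < v
            · rw [if_pos h, if_pos (lt_sub_iff_add_lt'.mpr h)]
            · rw [if_neg h, if_neg (fun hc => h (lt_sub_iff_add_lt'.mp hc))]
          rw [hx, integral_indicator_const _ measurableSet_Iio, smul_eq_mul, mul_comm, measureReal_def]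
  exact ⟨hF1, hF2, hmain.trans h2⟩

lemma key' (f : ℝ → ℝ) (hfm : Measurable f) (hf : Integrable f)
    (ν : Measure ℝ) [IsProbabilityMeasure ν] (d : ℝ) :
    IntegrableOn (fun u => ∫ x, f (u - d + x) ∂ν) (Ioi 0) ∧
    (∫ u in Ioi 0, ‖∫ x, f (u - d + x) ∂ν‖) ≤ (∫ v, ‖f v‖) ∧
    ∫ u in Ioi 0, ∫ x, f (u - d + x) ∂ν = ∫ v, f v * (ν (Iio (v + d))).toReal := by
  have h := key f hfm hf ν (-d)
  simp only [sub_neg_eq_add] at h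
  simpa only [sub_eq_add_neg] using h

lemma gauss_singleton {v : ℝ≥0} (hv : v ≠ 0) (a : ℝ) : gaussianReal 0 v {a} = 0 :=
  gaussianReal_absolutelyContinuous 0 hv (Real.volume_singleton)

lemma gauss_Ici_Ioi {v : ℝ≥0} (hv : v ≠ 0) (a : ℝ) :
    gaussianReal 0 v (Ici a) = gaussianReal 0 v (Ioi a) := by
  rw [← Set.Ioi_insert, ← Set.singleton_union]
  refine le_antisymm ?_ (measure_mono Set.subset_union_right)
  calc gaussianReal 0 v ({a} ∪ Ioi a) ≤ gaussianReal 0 v {a} + gaussianReal 0 v (Ioi a) :=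
        measure_union_le _ _
    _ = gaussianReal 0 v (Ioi a) := by rw [gauss_singleton hv, zero_add]

lemma gauss_symm {v : ℝ≥0} (hv : v ≠ 0) (w : ℝ) :
    gaussianReal 0 v (Iio w) = gaussianReal 0 v (Ici (-w)) := by
  have hmap : (gaussianReal 0 v).map (fun x => -x) = gaussianReal 0 v := by
    have := gaussianReal_map_const_mul (μ := 0) (v := v) (-1)
    have h1 : (⟨(-1 : ℝ)^2, sq_nonneg _⟩ : ℝ≥0) = 1 := by ext; norm_num
    simp only [h1, one_mul, mul_zero] at this
    simpa [neg_one_mul] using this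
  rw [gauss_Ici_Ioi hv]
  calc gaussianReal 0 v (Iio w)
      = (gaussianReal 0 v).map (fun x => -x) (Iio w) := by rw [hmap]
    _ = gaussianReal 0 v ((fun x : ℝ => -x) ⁻¹' (Iio w)) :=
        Measure.map_apply measurable_neg measurableSet_Iio
    _ = gaussianReal 0 v (Ioi (-w)) := by congr 1; ext x; simp [neg_lt]


lemma integral_gauss_pdf (g : ℝ → ℝ) {v : ℝ≥0} (hv : v ≠ 0) :
    ∫ x, g x ∂(gaussianReal 0 v) = ∫ x, g x * gaussianPDFReal 0 v x := by
  rw [gaussianReal_of_var_ne_zero 0 hv, gaussianPDF_def]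
  have h : (fun x => ENNReal.ofReal (gaussianPDFReal 0 v x))
      = fun x => ((gaussianPDFReal 0 v x).toNNReal : ℝ≥0∞) := rfl
  rw [h, integral_withDensity_eq_integral_smul
    ((measurable_gaussianPDFReal 0 v).real_toNNReal) g]
  refine integral_congr_ae (Filter.Eventually.of_forall fun x => ?_)
  show (gaussianPDFReal 0 v x).toNNReal • g x = g x * gaussianPDFReal 0 v x
  rw [NNReal.smul_def, Real.coe_toNNReal _ (gaussianPDFReal_nonneg 0 v x), smul_eq_mul, mul_comm]

lemma meas_pdf (t : ℝ) :
    Measurable (fun p : ℝ × ℝ => gaussianPDFReal 0 (t - p.1).toNNReal p.2) := by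
  have h : (fun p : ℝ × ℝ => gaussianPDFReal 0 (t - p.1).toNNReal p.2)
      = fun p => (Real.sqrt (2 * Real.pi * max (t - p.1) 0))⁻¹ *
          Real.exp (-(p.2 - 0) ^ 2 / (2 * max (t - p.1) 0)) := by
    funext p
    rw [gaussianPDFReal, Real.coe_toNNReal']
  rw [h]
  apply Measurable.mul
  · exact (Real.continuous_sqrt.measurable.comp (by fun_prop)).inv
  · exact (Real.continuous_exp.measurable).comp ((by fun_prop : Measurable fun p : ℝ × ℝ => -(p.2 - 0)^2).div (by fun_prop))

/-- Lemma 5.3(ii)-(iii): the macroscopic current across the origin for the mild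
solution `μ(t,·) = S_{−t}T_tφ − ∫_0^t S_{−(t−s)}T_{t−s}ψ(s,·) ds` of the drifted
heat equation with source, where `γ_τ` is the centered Gaussian law of variance `τ`. -/
theorem stmt_6 (t c : ℝ) (ht : 0 < t) (φ : ℝ → ℝ) (hφ : Integrable φ)
    (ψ : ℝ × ℝ → ℝ) (hψc : Continuous ψ) (hψs : HasCompactSupport ψ)
    (μ R : ℝ → ℝ)
    (hμ : ∀ u, μ u
      = (∫ x, φ (u - c * t + x) ∂(gaussianReal 0 t.toNNReal))
        - ∫ s in (0 : ℝ)..t,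
            ∫ x, ψ (s, u - c * (t - s) + x) ∂(gaussianReal 0 (t - s).toNNReal))
    (hR : ∀ u, R u
      = ((gaussianReal 0 t.toNNReal) (Set.Ici (-u - c * t))).toReal
        - if 0 ≤ u then 1 else 0) :
    IntegrableOn (fun u => μ u - φ u) (Set.Ioi 0) ∧
    ∫ u in Set.Ioi (0 : ℝ), (μ u - φ u)
      = (∫ u, φ u * R u)
        - ∫ s in (0 : ℝ)..t,
            ∫ v, ψ (s, v) *
              ((gaussianReal 0 (t - s).toNNReal)
                (Set.Ici (-v - c * (t - s)))).toReal := by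
  -- bounds for ψ
  obtain ⟨r, hr⟩ := hψs.isBounded.subset_closedBall 0
  obtain ⟨Mb, hMb⟩ := hψc.bounded_above_of_compact_support hψs
  set Ψ : ℝ → ℝ := (Icc (-r) r).indicator (fun _ => max Mb 0) with hΨ
  have hΨint : Integrable Ψ := by
    refine IntegrableOn.integrable_indicator ?_ measurableSet_Icc
    exact (integrableOn_const_iff).mpr (Or.inr (by rw [Real.volume_Icc]; exact ENNReal.ofReal_lt_top))
  have hsupp_y : ∀ s y : ℝ, ψ (s, y) ≠ 0 → y ∈ Icc (-r) r := by
    intro s y h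
    have hmem : (s, y) ∈ tsupport ψ := subset_closure (by simpa [Function.mem_support] using h)
    have h2 : ‖((s, y) : ℝ × ℝ)‖ ≤ r := by simpa [mem_closedBall_zero_iff] using hr hmem
    exact abs_le.mp (le_trans (norm_snd_le ((s, y) : ℝ × ℝ)) h2)
  have hψ_le : ∀ s y : ℝ, ‖ψ (s, y)‖ ≤ Ψ y := by
    intro s y
    by_cases h : ψ (s, y) = 0
    · rw [h, norm_zero]
      exact indicator_nonneg (fun _ _ => le_max_right _ _) y
    · rw [hΨ, indicator_of_mem (hsupp_y s y h)]
      exact le_max_of_le_left (hMb _)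
  have hψsl_cont : ∀ s : ℝ, Continuous (fun y => ψ (s, y)) :=
    fun s => hψc.comp (Continuous.prodMk_right s)
  have hψsl_supp : ∀ s : ℝ, HasCompactSupport (fun y => ψ (s, y)) := by
    intro s
    apply HasCompactSupport.intro (isCompact_Icc (a := -r) (b := r))
    intro y hy
    by_contra h
    exact hy (hsupp_y s y h)
  have hψint : ∀ s : ℝ, Integrable (fun y => ψ (s, y)) :=
    fun s => (hψsl_cont s).integrable_of_hasCompactSupport (hψsl_supp s)
  set C2 : ℝ := ∫ y, Ψ y with hC2
  have hL1 : ∀ s : ℝ, (∫ y, ‖ψ (s, y)‖) ≤ C2 :=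
    fun s => integral_mono (hψint s).norm hΨint (fun y => hψ_le s y)
  have htne : (t.toNNReal : ℝ≥0) ≠ 0 := (Real.toNNReal_pos.mpr ht).ne'
  -- measurable version of φ
  set φ' := hφ.1.mk φ with hφ'def
  have hφ'm : StronglyMeasurable φ' := hφ.1.stronglyMeasurable_mk
  have heq : φ =ᵐ[volume] φ' := hφ.1.ae_eq_mk
  have hφ' : Integrable φ' := hφ.congr heq
  have keyA := key' φ' hφ'm.measurable hφ' (gaussianReal 0 t.toNNReal) (c * t)
  have hAA' : ∀ u : ℝ, (∫ x, φ (u - c * t + x) ∂(gaussianReal 0 t.toNNReal))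
      = ∫ x, φ' (u - c * t + x) ∂(gaussianReal 0 t.toNNReal) := by
    intro u
    refine integral_congr_ae ?_
    have hmp := measurePreserving_add_left volume (u - c * t)
    have h1 : (fun x => φ (u - c * t + x)) =ᵐ[volume] fun x => φ' (u - c * t + x) :=
      ae_eq_comp hmp.measurable.aemeasurable (by rwa [hmp.map_eq])
    exact h1.filter_mono (gaussianReal_absolutelyContinuous 0 htne).ae_le
  have hsymA : ∀ v : ℝ, ((gaussianReal 0 t.toNNReal) (Iio (v + c * t))).toReal
      = ((gaussianReal 0 t.toNNReal) (Ici (-v - c * t))).toReal := by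
    intro v
    rw [gauss_symm htne (v + c * t), show -(v + c * t) = -v - c * t by ring]
  -- ψ side
  have keyB : ∀ s : ℝ,
      IntegrableOn (fun u => ∫ x, ψ (s, u - c * (t - s) + x)
          ∂(gaussianReal 0 (t - s).toNNReal)) (Ioi 0) ∧
      (∫ u in Ioi 0, ‖∫ x, ψ (s, u - c * (t - s) + x)
          ∂(gaussianReal 0 (t - s).toNNReal)‖) ≤ (∫ y, ‖ψ (s, y)‖) ∧
      (∫ u in Ioi 0, ∫ x, ψ (s, u - c * (t - s) + x) ∂(gaussianReal 0 (t - s).toNNReal))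
        = ∫ v, ψ (s, v) *
            ((gaussianReal 0 (t - s).toNNReal) (Iio (v + c * (t - s)))).toReal :=
    fun s => key' (fun y => ψ (s, y)) (hψsl_cont s).measurable (hψint s)
      (gaussianReal 0 (t - s).toNNReal) (c * (t - s))
  set G : ℝ × ℝ → ℝ := fun p =>
    ∫ x, ψ (p.1, p.2 - c * (t - p.1) + x) * gaussianPDFReal 0 (t - p.1).toNNReal x with hGdef
  have hGsm : StronglyMeasurable G := by
    apply StronglyMeasurable.integral_prod_right'
      (f := fun q : (ℝ × ℝ) × ℝ => ψ (q.1.1, q.1.2 - c * (t - q.1.1) + q.2) *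
        gaussianPDFReal 0 (t - q.1.1).toNNReal q.2)
    apply Measurable.stronglyMeasurable
    apply Measurable.mul
    · exact hψc.measurable.comp (by fun_prop)
    · exact (meas_pdf t).comp (by fun_prop : Measurable fun q : (ℝ × ℝ) × ℝ => (q.1.1, q.2))
  have hFG : ∀ s : ℝ, s < t → ∀ u : ℝ,
      (∫ x, ψ (s, u - c * (t - s) + x) ∂(gaussianReal 0 (t - s).toNNReal)) = G (s, u) := by
    intro s hs u
    have hv : ((t - s).toNNReal : ℝ≥0) ≠ 0 := (Real.toNNReal_pos.mpr (by linarith)).ne'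
    exact integral_gauss_pdf (fun x => ψ (s, u - c * (t - s) + x)) hv
  set MM : Measure (ℝ × ℝ) := (volume.restrict (Ioc 0 t)).prod (volume.restrict (Ioi 0)) with hMM
  have haes : ∀ᵐ s ∂(volume.restrict (Ioc 0 t)), s < t := by
    have h1 : ∀ᵐ s : ℝ ∂volume, s ∉ ({t} : Set ℝ) :=
      measure_eq_zero_iff_ae_notMem.mp Real.volume_singleton
    filter_upwards [ae_restrict_mem measurableSet_Ioc,
      h1.filter_mono (ae_mono Measure.restrict_le_self)] with s hs hne
    exact lt_of_le_of_ne hs.2 (by simpa using hne)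
  have hGint : Integrable G MM := by
    rw [hMM, integrable_prod_iff hGsm.aestronglyMeasurable]
    constructor
    · filter_upwards [haes] with s hs
      exact (keyB s).1.congr (Filter.Eventually.of_forall fun u => hFG s hs u)
    · have hsm2 : StronglyMeasurable fun s => ∫ u in Ioi 0, ‖G (s, u)‖ :=
        hGsm.norm.integral_prod_right'
      refine Integrable.mono' (integrable_const C2) hsm2.aestronglyMeasurable ?_
      filter_upwards [haes] with s hs
      have h1 : (∫ u in Ioi 0, ‖G (s, u)‖)
          = ∫ u in Ioi 0, ‖∫ x, ψ (s, u - c * (t - s) + x)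
              ∂(gaussianReal 0 (t - s).toNNReal)‖ :=
        integral_congr_ae (Filter.Eventually.of_forall fun u => by
          show ‖G (s, u)‖ = ‖∫ x, ψ (s, u - c * (t - s) + x)
            ∂(gaussianReal 0 (t - s).toNNReal)‖
          rw [hFG s hs u])
      rw [Real.norm_of_nonneg (integral_nonneg fun u => norm_nonneg _), h1]
      exact le_trans (keyB s).2.1 (hL1 s)
  have hBrw : ∀ u : ℝ, (∫ s in (0:ℝ)..t, ∫ x, ψ (s, u - c * (t - s) + x)
      ∂(gaussianReal 0 (t - s).toNNReal)) = ∫ s in Ioc 0 t, G (s, u) := by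
    intro u
    rw [intervalIntegral.integral_of_le ht.le]
    refine integral_congr_ae ?_
    filter_upwards [haes] with s hs
    exact hFG s hs u
  have hBint : IntegrableOn (fun u => ∫ s in Ioc 0 t, G (s, u)) (Ioi 0) :=
    hGint.integral_prod_right
  have hswap : (∫ u in Ioi 0, ∫ s in Ioc 0 t, G (s, u))
      = ∫ s in Ioc 0 t, ∫ u in Ioi 0, G (s, u) := by
    rw [← integral_prod_symm _ hGint, integral_prod _ hGint]
  have hinner : (∫ s in Ioc 0 t, ∫ u in Ioi 0, G (s, u))
      = ∫ s in Ioc 0 t, ∫ v, ψ (s, v) *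
          ((gaussianReal 0 (t - s).toNNReal) (Ici (-v - c * (t - s)))).toReal := by
    refine integral_congr_ae ?_
    filter_upwards [haes] with s hs
    have hv : ((t - s).toNNReal : ℝ≥0) ≠ 0 := (Real.toNNReal_pos.mpr (by linarith)).ne'
    calc (∫ u in Ioi 0, G (s, u))
        = ∫ u in Ioi 0, ∫ x, ψ (s, u - c * (t - s) + x)
            ∂(gaussianReal 0 (t - s).toNNReal) :=
          integral_congr_ae (Filter.Eventually.of_forall fun u => (hFG s hs u).symm)
      _ = ∫ v, ψ (s, v) *
            ((gaussianReal 0 (t - s).toNNReal) (Iio (v + c * (t - s)))).toReal := (keyB s).2.2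
      _ = ∫ v, ψ (s, v) *
            ((gaussianReal 0 (t - s).toNNReal) (Ici (-v - c * (t - s)))).toReal := by
          refine integral_congr_ae (Filter.Eventually.of_forall fun v => ?_)
          show ψ (s, v) * ((gaussianReal 0 (t - s).toNNReal) (Iio (v + c * (t - s)))).toReal
            = ψ (s, v) * ((gaussianReal 0 (t - s).toNNReal) (Ici (-v - c * (t - s)))).toReal
          rw [gauss_symm hv (v + c * (t - s)),
            show -(v + c * (t - s)) = -v - c * (t - s) by ring]
  -- a.e. congruence of the integrand
  have hcong : (fun u => μ u - φ u) =ᵐ[volume.restrict (Ioi 0)]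
      fun u => ((∫ x, φ' (u - c * t + x) ∂(gaussianReal 0 t.toNNReal)) - φ' u)
        - ∫ s in Ioc 0 t, G (s, u) := by
    filter_upwards [ae_restrict_of_ae heq] with u hu
    rw [hμ u, hAA' u, hu, hBrw u]
    ring
  have hAφint : Integrable (fun u => (∫ x, φ' (u - c * t + x)
      ∂(gaussianReal 0 t.toNNReal)) - φ' u) (volume.restrict (Ioi 0)) :=
    keyA.1.sub hφ'.integrableOn
  constructor
  · exact (hAφint.sub hBint).congr hcong.symm
  -- RHS pieces
  have hq_mono : Monotone fun u : ℝ =>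
      ((gaussianReal 0 t.toNNReal) (Ici (-u - c * t))).toReal := by
    intro u u' huu'
    exact ENNReal.toReal_mono (measure_ne_top _ _)
      (measure_mono (Ici_subset_Ici.mpr (by linarith)))
  have hq_le_one : ∀ u : ℝ, ((gaussianReal 0 t.toNNReal) (Ici (-u - c * t))).toReal ≤ 1 := by
    intro u
    have h1 : (gaussianReal 0 t.toNNReal) (Ici (-u - c * t)) ≤ 1 := prob_le_one
    simpa using ENNReal.toReal_mono (by simp) h1
  have hqint : Integrable (fun u => φ u *
      ((gaussianReal 0 t.toNNReal) (Ici (-u - c * t))).toReal) volume := by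
    refine Integrable.mono' hφ.norm (hφ.1.mul hq_mono.measurable.aestronglyMeasurable)
      (Filter.Eventually.of_forall fun u => ?_)
    rw [norm_mul]
    calc ‖φ u‖ * ‖((gaussianReal 0 t.toNNReal) (Ici (-u - c * t))).toReal‖
        ≤ ‖φ u‖ * 1 := by
          gcongr
          rw [Real.norm_of_nonneg ENNReal.toReal_nonneg]
          exact hq_le_one u
      _ = ‖φ u‖ := mul_one _
  have hitem : Measurable fun u : ℝ => if 0 ≤ u then (1:ℝ) else 0 := by
    have : MeasurableSet {u : ℝ | 0 ≤ u} := measurableSet_Ici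
    exact Measurable.ite this measurable_const measurable_const
  have hiteint : Integrable (fun u => φ u * (if 0 ≤ u then (1:ℝ) else 0)) volume := by
    refine Integrable.mono' hφ.norm (hφ.1.mul hitem.aestronglyMeasurable)
      (Filter.Eventually.of_forall fun u => ?_)
    rw [norm_mul]
    calc ‖φ u‖ * ‖(if 0 ≤ u then (1:ℝ) else 0)‖ ≤ ‖φ u‖ * 1 := by
          gcongr
          by_cases h : 0 ≤ u <;> simp [h]
      _ = ‖φ u‖ := mul_one _
  have hRrw : (∫ u, φ u * R u)
      = (∫ u, φ u * ((gaussianReal 0 t.toNNReal) (Ici (-u - c * t))).toReal)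
        - ∫ u, φ u * (if 0 ≤ u then (1:ℝ) else 0) := by
    rw [← integral_sub hqint hiteint]
    refine integral_congr_ae (Filter.Eventually.of_forall fun u => ?_)
    show φ u * R u = φ u * ((gaussianReal 0 t.toNNReal) (Ici (-u - c * t))).toReal
      - φ u * (if 0 ≤ u then (1:ℝ) else 0)
    rw [hR u, mul_sub]
  have hIoiφ : (∫ u in Ioi (0:ℝ), φ u) = ∫ u, φ u * (if 0 ≤ u then (1:ℝ) else 0) := by
    rw [← integral_Ici_eq_integral_Ioi, ← integral_indicator measurableSet_Ici]
    refine integral_congr_ae (Filter.Eventually.of_forall fun u => ?_)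
    by_cases h : 0 ≤ u <;> simp [indicator_apply, h]
  have hA'val : (∫ u in Ioi 0, ∫ x, φ' (u - c * t + x) ∂(gaussianReal 0 t.toNNReal))
      = ∫ v, φ v * ((gaussianReal 0 t.toNNReal) (Ici (-v - c * t))).toReal := by
    rw [keyA.2.2]
    refine integral_congr_ae ?_
    filter_upwards [heq] with v hv
    rw [hsymA v, ← hv]
  have hφ'Ioi : (∫ u in Ioi (0:ℝ), φ' u) = ∫ u in Ioi (0:ℝ), φ u :=
    integral_congr_ae (ae_restrict_of_ae heq.symm)
  -- final computation
  calc ∫ u in Ioi (0:ℝ), (μ u - φ u)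
      = ∫ u in Ioi 0, (((∫ x, φ' (u - c * t + x) ∂(gaussianReal 0 t.toNNReal)) - φ' u)
          - ∫ s in Ioc 0 t, G (s, u)) := integral_congr_ae hcong
    _ = (∫ u in Ioi 0, ((∫ x, φ' (u - c * t + x) ∂(gaussianReal 0 t.toNNReal)) - φ' u))
          - ∫ u in Ioi 0, ∫ s in Ioc 0 t, G (s, u) := integral_sub hAφint hBint
    _ = ((∫ u in Ioi 0, ∫ x, φ' (u - c * t + x) ∂(gaussianReal 0 t.toNNReal))
          - ∫ u in Ioi 0, φ' u) - ∫ s in Ioc 0 t, ∫ u in Ioi 0, G (s, u) := by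
        rw [integral_sub keyA.1 hφ'.integrableOn, hswap]
    _ = (∫ u, φ u * R u)
        - ∫ s in (0 : ℝ)..t, ∫ v, ψ (s, v) *
            ((gaussianReal 0 (t - s).toNNReal) (Ici (-v - c * (t - s)))).toReal := by
        rw [hA'val, hφ'Ioi, hIoiφ, hRrw, hinner, intervalIntegral.integral_of_le ht.le]
end

section
/- Let t > 0, c ∈ ℝ, and let φ : ℝ → ℝ be Lebesgue integrable. Then the function u ↦ ∫_ℝ φ(u − ct + x) dγ_t(x) − φ(u) is Lebesgue integrable on (0,∞) and ∫_0^∞ ( ∫_ℝ φ(u − ct + x) dγ_t(x) − φ(u) ) du = ∫_ℝ φ(u) ( γ_t( [−u − ct, ∞) ) − 1_{[0,∞)}(u) ) du. -/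
open MeasureTheory ProbabilityTheory

private lemma gauss_sym (t : ℝ) (ht : 0 < t) (b : ℝ) :
    gaussianReal 0 t.toNNReal (Set.Ici (-b)) = gaussianReal 0 t.toNNReal (Set.Iio b) := by
  set γ := gaussianReal 0 t.toNNReal with hγ
  have hv : t.toNNReal ≠ 0 := (Real.toNNReal_pos.mpr ht).ne'
  have hmap : γ.map (fun x => (-1 : ℝ) * x) = γ := by
    rw [hγ, gaussianReal_map_const_mul]; norm_num
  have h1 : γ (Set.Ici (-b)) = γ (Set.Iic b) := by
    conv_lhs => rw [← hmap]
    rw [Measure.map_apply (measurable_const_mul _) measurableSet_Ici]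
    congr 1
    ext x
    simp only [Set.mem_preimage, Set.mem_Ici, Set.mem_Iic]
    constructor <;> intro <;> linarith
  have h0 : γ {b} = 0 := gaussianReal_absolutelyContinuous _ hv (measure_singleton _)
  rw [h1]
  refine le_antisymm ?_ (measure_mono Set.Iio_subset_Iic_self)
  calc γ (Set.Iic b) ≤ γ (Set.Iio b) + γ {b} := by
        rw [← Set.Iio_union_right]; exact measure_union_le _ _
    _ = γ (Set.Iio b) := by rw [h0, add_zero]

private lemma shift_Ioi_s7 (φ : ℝ → ℝ) (a : ℝ) :
    ∫ u in Set.Ioi (0 : ℝ), φ (u + a) = ∫ y in Set.Ioi a, φ y := by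
  rw [← integral_indicator measurableSet_Ioi, ← integral_indicator measurableSet_Ioi,
    ← integral_add_right_eq_self ((Set.Ioi a).indicator φ) a]
  congr 1
  funext u
  simp [Set.indicator_apply, Set.mem_Ioi, lt_add_iff_pos_left]

private lemma stmt_7_meas (t c : ℝ) (ht : 0 < t) (φ : ℝ → ℝ) (hm : Measurable φ)
    (hφ : Integrable φ) :
    IntegrableOn
      (fun u => (∫ x, φ (u - c * t + x) ∂(gaussianReal 0 t.toNNReal)) - φ u)
      (Set.Ioi 0) ∧
    ∫ u in Set.Ioi (0 : ℝ),
        ((∫ x, φ (u - c * t + x) ∂(gaussianReal 0 t.toNNReal)) - φ u)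
      = ∫ u, φ u * (((gaussianReal 0 t.toNNReal) (Set.Ici (-u - c * t))).toReal
          - if 0 ≤ u then 1 else 0) := by
  set γ := gaussianReal 0 t.toNNReal with hγ
  have hv : t.toNNReal ≠ 0 := (Real.toNNReal_pos.mpr ht).ne'
  set μ := volume.restrict (Set.Ioi (0 : ℝ)) with hμ
  have hmeas : Measurable (fun p : ℝ × ℝ => φ (p.1 - c * t + p.2)) := by
    apply hm.comp; fun_prop
  -- translated integrability
  have htrans : ∀ a : ℝ, Integrable (fun u : ℝ => φ (u - c * t + a)) := by
    intro a
    have h2 : (fun u : ℝ => φ (u - c * t + a)) = fun u => φ (u + (a - c * t)) := by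
      funext u; congr 1; ring
    rw [h2]; exact hφ.comp_add_right _
  -- Step A : product integrability on μ ⊗ γ
  have hA : Integrable (fun p : ℝ × ℝ => φ (p.1 - c * t + p.2)) (μ.prod γ) := by
    rw [integrable_prod_iff' hmeas.aestronglyMeasurable]
    constructor
    · exact ae_of_all _ fun x => (htrans x).integrableOn
    · refine Integrable.mono' (integrable_const (∫ y, ‖φ y‖)) ?_ (ae_of_all _ fun x => ?_)
      · exact (hmeas.norm.stronglyMeasurable.integral_prod_left').aestronglyMeasurable
      · rw [Real.norm_of_nonneg (integral_nonneg fun u => norm_nonneg _)]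
        calc ∫ u in Set.Ioi (0:ℝ), ‖φ (u - c * t + x)‖
            ≤ ∫ u, ‖φ (u - c * t + x)‖ :=
              setIntegral_le_integral (htrans x).norm (ae_of_all _ fun u => norm_nonneg _)
          _ = ∫ y, ‖φ y‖ := by
              have h2 : (fun u : ℝ => ‖φ (u - c * t + x)‖)
                  = fun u => ‖φ (u + (x - c * t))‖ := by funext u; congr 2; ring
              rw [h2]; exact integral_add_right_eq_self (fun y => ‖φ y‖) _
  have hAu : ∀ᵐ u ∂μ, Integrable (fun x => φ (u - c * t + x)) γ :=
    ((integrable_prod_iff hmeas.aestronglyMeasurable).mp hA).1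
  -- Step B
  have hB1 : Integrable (fun p : ℝ × ℝ => φ p.1) (μ.prod γ) := by
    have hm1 : Measurable (fun p : ℝ × ℝ => φ p.1) := hm.comp measurable_fst
    rw [integrable_prod_iff hm1.aestronglyMeasurable]
    refine ⟨ae_of_all _ fun u => (integrable_const (φ u) : Integrable (fun _ : ℝ => φ u) γ), ?_⟩
    have : (fun u : ℝ => ∫ _ : ℝ, ‖φ u‖ ∂γ) = fun u => ‖φ u‖ := by
      funext u; simp
    rw [this]
    exact hφ.norm.integrableOn
  have hB : Integrable (fun p : ℝ × ℝ => φ (p.1 - c * t + p.2) - φ p.1) (μ.prod γ) :=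
    hA.sub hB1
  -- a.e. equality of integrand forms
  have hae : (fun u => ∫ x, (φ (u - c * t + x) - φ u) ∂γ)
      =ᵐ[μ] fun u => (∫ x, φ (u - c * t + x) ∂γ) - φ u := by
    filter_upwards [hAu] with u hu
    rw [integral_sub hu (integrable_const _), integral_const]
    simp
  have hC0 : Integrable (fun u => ∫ x, (φ (u - c * t + x) - φ u) ∂γ) μ :=
    hB.integral_prod_left
  refine ⟨hC0.congr hae, ?_⟩
  -- Step E: inner computation for each x
  have hE : ∀ x : ℝ, ∫ u in Set.Ioi (0:ℝ), (φ (u - c * t + x) - φ u)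
      = ∫ y, φ y * ((if x - c * t < y then (1:ℝ) else 0) - if 0 < y then 1 else 0) := by
    intro x
    rw [integral_sub ((htrans x).integrableOn) hφ.integrableOn]
    have h1 : ∫ u in Set.Ioi (0:ℝ), φ (u - c * t + x) = ∫ y in Set.Ioi (x - c * t), φ y := by
      have h2 : (fun u : ℝ => φ (u - c * t + x)) = fun u => φ (u + (x - c * t)) := by
        funext u; congr 1; ring
      rw [h2, shift_Ioi_s7]
    rw [h1, ← integral_indicator measurableSet_Ioi, ← integral_indicator measurableSet_Ioi,
      ← integral_sub (hφ.indicator measurableSet_Ioi) (hφ.indicator measurableSet_Ioi)]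
    congr 1
    funext y
    simp only [Set.indicator_apply, Set.mem_Ioi, mul_sub, mul_ite, mul_one, mul_zero]
  -- Step F: product integrability for second swap
  have hhm : Measurable (fun p : ℝ × ℝ =>
      φ p.2 * ((if p.1 - c * t < p.2 then (1:ℝ) else 0) - if 0 < p.2 then 1 else 0)) := by
    refine (hm.comp measurable_snd).mul (Measurable.sub ?_ ?_)
    · exact Measurable.ite (measurableSet_lt ((measurable_fst).sub measurable_const)
        measurable_snd) measurable_const measurable_const
    · exact Measurable.ite (measurableSet_lt measurable_const measurable_snd)
        measurable_const measurable_const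
  have hφ2 : Integrable (fun p : ℝ × ℝ => φ p.2) (γ.prod volume) := by
    have hm2 : Measurable (fun p : ℝ × ℝ => φ p.2) := hm.comp measurable_snd
    rw [integrable_prod_iff hm2.aestronglyMeasurable]
    refine ⟨ae_of_all _ fun _ => hφ, ?_⟩
    exact (integrable_const (∫ y, ‖φ y‖) : Integrable (fun _ : ℝ => ∫ y, ‖φ y‖) γ)
  have hF : Integrable (fun p : ℝ × ℝ =>
      φ p.2 * ((if p.1 - c * t < p.2 then (1:ℝ) else 0) - if 0 < p.2 then 1 else 0))
      (γ.prod volume) := by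
    refine Integrable.mono' hφ2.norm hhm.aestronglyMeasurable (ae_of_all _ fun p => ?_)
    rw [norm_mul]
    have : ‖(if p.1 - c * t < p.2 then (1:ℝ) else 0) - if 0 < p.2 then 1 else 0‖ ≤ 1 := by
      split_ifs <;> norm_num
    calc ‖φ p.2‖ * ‖(if p.1 - c * t < p.2 then (1:ℝ) else 0) - if 0 < p.2 then 1 else 0‖
        ≤ ‖φ p.2‖ * 1 := mul_le_mul_of_nonneg_left this (norm_nonneg _)
      _ = ‖φ p.2‖ := mul_one _
  -- Step G: inner integral over γ
  have hG : ∀ y : ℝ, ∫ x, φ y * ((if x - c * t < y then (1:ℝ) else 0) - if 0 < y then 1 else 0) ∂γ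
      = φ y * ((γ (Set.Iio (y + c * t))).toReal - if 0 < y then 1 else 0) := by
    intro y
    rw [integral_const_mul]
    congr 1
    have hind : (fun x : ℝ => if x - c * t < y then (1:ℝ) else 0)
        = (Set.Iio (y + c * t)).indicator (fun _ => (1:ℝ)) := by
      funext x
      simp only [Set.indicator_apply, Set.mem_Iio, sub_lt_iff_lt_add]
    rw [show (fun x : ℝ => (if x - c * t < y then (1:ℝ) else 0) - if 0 < y then 1 else 0)
        = fun x => (Set.Iio (y + c * t)).indicator (fun _ => (1:ℝ)) x - if 0 < y then 1 else 0
      from by rw [← hind]]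
    rw [integral_sub ((integrable_const (1:ℝ)).indicator measurableSet_Iio) (integrable_const _),
      integral_indicator_const (1:ℝ) measurableSet_Iio, integral_const]
    simp [Measure.real]
  -- chain
  calc ∫ u in Set.Ioi (0:ℝ), ((∫ x, φ (u - c * t + x) ∂γ) - φ u)
      = ∫ u in Set.Ioi (0:ℝ), ∫ x, (φ (u - c * t + x) - φ u) ∂γ := (integral_congr_ae hae).symm
    _ = ∫ x, (∫ u in Set.Ioi (0:ℝ), (φ (u - c * t + x) - φ u)) ∂γ := by
        exact integral_integral_swap hB
    _ = ∫ x, (∫ y, φ y * ((if x - c * t < y then (1:ℝ) else 0) - if 0 < y then 1 else 0)) ∂γ := by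
        exact integral_congr_ae (ae_of_all _ fun x => hE x)
    _ = ∫ y, (∫ x, φ y * ((if x - c * t < y then (1:ℝ) else 0) - if 0 < y then 1 else 0) ∂γ) := by
        exact integral_integral_swap hF
    _ = ∫ y, φ y * ((γ (Set.Iio (y + c * t))).toReal - if 0 < y then 1 else 0) :=
        integral_congr_ae (ae_of_all _ fun y => hG y)
    _ = ∫ u, φ u * ((γ (Set.Ici (-u - c * t))).toReal - if 0 ≤ u then 1 else 0) := by
        refine integral_congr_ae ?_
        have hne : ∀ᵐ y : ℝ, y ≠ (0:ℝ) := by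
          refine ae_iff.mpr ?_
          simp only [ne_eq, not_not, Set.setOf_eq_eq_singleton]
          exact Real.volume_singleton
        filter_upwards [hne] with y hy
        have hs : γ (Set.Ici (-y - c * t)) = γ (Set.Iio (y + c * t)) := by
          have := gauss_sym t ht (y + c * t)
          rw [hγ]
          convert this using 3
          ring
        rw [hs]
        congr 2
        rcases hy.lt_or_gt with h | h
        · rw [if_neg (not_lt.mpr h.le), if_neg (not_le.mpr h)]
        · rw [if_pos h, if_pos h.le]

/-- Term I (equation (C1)) in the proof of Lemma 5.3: with `γ_t` the centered
Gaussian law of variance `t`,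
`∫_0^∞ (∫ φ(u − ct + x) dγ_t(x) − φ(u)) du = ∫_ℝ φ(u) (γ_t[−u−ct, ∞) − 1_{[0,∞)}(u)) du`. -/
theorem stmt_7 (t c : ℝ) (ht : 0 < t) (φ : ℝ → ℝ) (hφ : Integrable φ) :
    IntegrableOn
      (fun u => (∫ x, φ (u - c * t + x) ∂(gaussianReal 0 t.toNNReal)) - φ u)
      (Set.Ioi 0) ∧
    ∫ u in Set.Ioi (0 : ℝ),
        ((∫ x, φ (u - c * t + x) ∂(gaussianReal 0 t.toNNReal)) - φ u)
      = ∫ u, φ u * (((gaussianReal 0 t.toNNReal) (Set.Ici (-u - c * t))).toReal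
          - if 0 ≤ u then 1 else 0) := by
  set γ := gaussianReal 0 t.toNNReal with hγ
  have hv : t.toNNReal ≠ 0 := (Real.toNNReal_pos.mpr ht).ne'
  set ψ := hφ.aestronglyMeasurable.mk φ with hψdef
  have hψm : Measurable ψ := hφ.aestronglyMeasurable.stronglyMeasurable_mk.measurable
  have hψae : φ =ᵐ[volume] ψ := hφ.aestronglyMeasurable.ae_eq_mk
  have hψint : Integrable ψ := hφ.congr hψae
  obtain ⟨h1, h2⟩ := stmt_7_meas t c ht ψ hψm hψint
  -- the inner Gaussian integrals agree for every u
  have hconv : ∀ u : ℝ, ∫ x, φ (u - c * t + x) ∂γ = ∫ x, ψ (u - c * t + x) ∂γ := by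
    intro u
    refine integral_congr_ae ?_
    have hqm : AEMeasurable (fun x : ℝ => u - c * t + x) γ :=
      (measurable_const_add _).aemeasurable
    have hac : γ.map (fun x : ℝ => u - c * t + x) ≪ volume := by
      rw [hγ, gaussianReal_map_const_add]
      exact gaussianReal_absolutelyContinuous _ hv
    exact ae_eq_comp' hqm hψae hac
  have heq : (fun u => (∫ x, ψ (u - c * t + x) ∂γ) - ψ u)
      =ᵐ[volume.restrict (Set.Ioi (0:ℝ))] fun u => (∫ x, φ (u - c * t + x) ∂γ) - φ u := by
    filter_upwards [ae_restrict_of_ae hψae] with u hu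
    rw [hconv u, hu]
  constructor
  · exact h1.congr heq
  · rw [integral_congr_ae heq.symm, h2]
    refine integral_congr_ae ?_
    filter_upwards [hψae] with u hu
    rw [hu]
end
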